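/- Let T₂₁ be a ν₂×μ₁ matrix and T₁₁ a ν₁×μ₁, T₂₂ a ν₂×μ₂ matrix over a field such that [T₁₁; T₂₁] has full column rank μ₁ and [T₂₁ T₂₂] has full row rank ν₂. Then the minimal rank of the partial matrix [[T₁₁, ?],[T₂₁, T₂₂]] equals μ₁ + ν₂ − rank T₂₁. -/

import Mathlib

open Matrix LinearMap Submodule Module

/-- Rank–nullity for a subspace under a linear map. -/
private lemma finrank_map_add_inf_ker {F V₁ V₂ : Type*} [Field F]
    [AddCommGroup V₁] [Module F V₁] [AddCommGroup V₂] [Module F V₂]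
    [FiniteDimensional F V₁] (p : Submodule F V₁) (π : V₁ →ₗ[F] V₂) :
    finrank F ↥(p.map π) + finrank F ↥(p ⊓ LinearMap.ker π) = finrank F ↥p := by
  have h := LinearMap.finrank_range_add_finrank_ker (π.domRestrict p)
  rw [LinearMap.range_domRestrict] at h
  rw [← h]
  congr 1
  rw [LinearMap.ker_domRestrict]
  have e : (LinearMap.ker π).comap p.subtype = (p ⊓ LinearMap.ker π).comap p.subtype := by
    rw [Submodule.comap_inf, Submodule.comap_subtype_self, top_inf_eq]
  rw [e]
  exact (Submodule.comapSubtypeEquivOfLe inf_le_left).finrank_eq.symm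

/-- Existence of a generalized inverse over a field. -/
private lemma exists_ginverse {F V₁ V₂ : Type*} [Field F]
    [AddCommGroup V₁] [Module F V₁] [AddCommGroup V₂] [Module F V₂]
    (f : V₁ →ₗ[F] V₂) : ∃ g : V₂ →ₗ[F] V₁, ∀ x, f (g (f x)) = f x := by
  obtain ⟨h, hh⟩ := f.rangeRestrict.exists_rightInverse_of_surjective f.range_rangeRestrict
  obtain ⟨W, hW⟩ := (LinearMap.range f).exists_isCompl
  refine ⟨h.comp (Submodule.projectionOnto _ _ hW), fun x => ?_⟩
  have hproj := Submodule.linearProjOfIsCompl_apply_left hW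
    (⟨f x, LinearMap.mem_range_self f x⟩ : LinearMap.range f)
  have key : ∀ y : LinearMap.range f, f (h y) = y := by
    intro y
    have := LinearMap.ext_iff.mp hh y
    exact congrArg Subtype.val this
  simp only [LinearMap.comp_apply, hproj, key]

theorem minRank_full_rank_case {F : Type*} [Field F] {ν₁ ν₂ μ₁ μ₂ : ℕ}
    (T₁₁ : Matrix (Fin ν₁) (Fin μ₁) F) (T₂₁ : Matrix (Fin ν₂) (Fin μ₁) F)
    (T₂₂ : Matrix (Fin ν₂) (Fin μ₂) F)
    (hcol : (Matrix.fromRows T₁₁ T₂₁).rank = μ₁)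
    (hrow : (Matrix.fromCols T₂₁ T₂₂).rank = ν₂) :
    sInf {r : ℕ | ∃ X : Matrix (Fin ν₁) (Fin μ₂) F,
        (Matrix.fromBlocks T₁₁ X T₂₁ T₂₂).rank = r} =
      μ₁ + ν₂ - T₂₁.rank := by
  classical
  set r := T₂₁.rank with hr
  have hrμ : r ≤ μ₁ := by
    simpa using T₂₁.rank_le_card_width
  -- the projection to the bottom rows
  set π : ((Fin ν₁ ⊕ Fin ν₂) → F) →ₗ[F] (Fin ν₂ → F) :=
    LinearMap.funLeft F F Sum.inr with hπ
  set L : (Fin μ₁ → F) →ₗ[F] ((Fin ν₁ ⊕ Fin ν₂) → F) :=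
    (Matrix.fromRows T₁₁ T₂₁).mulVecLin with hL
  set C : Submodule F ((Fin ν₁ ⊕ Fin ν₂) → F) := LinearMap.range L with hC
  have hCrank : finrank F ↥C = μ₁ := hcol
  -- π ∘ L = T₂₁.mulVecLin
  have hπL : π.comp L = T₂₁.mulVecLin := by
    ext x i
    simp [hπ, hL, LinearMap.funLeft_apply, Matrix.mulVecLin_apply]
  have hmapC : C.map π = LinearMap.range T₂₁.mulVecLin := by
    rw [hC, ← LinearMap.range_comp, hπL]
  have hCk : finrank F ↥(C ⊓ LinearMap.ker π) = μ₁ - r := by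
    have h := finrank_map_add_inf_ker C π
    rw [hmapC, hCrank] at h
    have : finrank F ↥(LinearMap.range T₂₁.mulVecLin) = r := rfl
    omega
  -- facts about any completion
  have key : ∀ X : Matrix (Fin ν₁) (Fin μ₂) F,
      C ≤ LinearMap.range (Matrix.fromBlocks T₁₁ X T₂₁ T₂₂).mulVecLin ∧
      (LinearMap.range (Matrix.fromBlocks T₁₁ X T₂₁ T₂₂).mulVecLin).map π = ⊤ := by
    intro X
    constructor
    · rintro v ⟨x, rfl⟩
      refine ⟨Sum.elim x 0, ?_⟩
      simp only [Matrix.mulVecLin_apply, Matrix.fromBlocks_mulVec, hL]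
      funext i
      cases i <;> simp [Matrix.fromRows_mulVec]
    · have hcomp : π.comp (Matrix.fromBlocks T₁₁ X T₂₁ T₂₂).mulVecLin =
          (Matrix.fromCols T₂₁ T₂₂).mulVecLin := by
        refine LinearMap.ext fun v => ?_
        have hv : v = Sum.elim (v ∘ Sum.inl) (v ∘ Sum.inr) := (Sum.elim_comp_inl_inr v).symm
        rw [LinearMap.comp_apply, Matrix.mulVecLin_apply, Matrix.mulVecLin_apply,
          Matrix.fromBlocks_mulVec]
        conv_rhs => rw [hv]
        rw [Matrix.fromCols_mulVec_sumElim]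
        funext i
        simp [hπ, LinearMap.funLeft_apply]
      rw [← LinearMap.range_comp, hcomp]
      apply Submodule.eq_top_of_finrank_eq
      rw [show finrank F ↥(LinearMap.range (Matrix.fromCols T₂₁ T₂₂).mulVecLin) = ν₂ from hrow]
      simp
  -- lower bound
  have lower : ∀ X : Matrix (Fin ν₁) (Fin μ₂) F,
      μ₁ + ν₂ - r ≤ (Matrix.fromBlocks T₁₁ X T₂₁ T₂₂).rank := by
    intro X
    obtain ⟨hle, htop⟩ := key X
    set V := LinearMap.range (Matrix.fromBlocks T₁₁ X T₂₁ T₂₂).mulVecLin with hV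
    have h := finrank_map_add_inf_ker V π
    have h1 : finrank F ↥(V.map π) = ν₂ := by rw [htop]; simp
    have h2 : finrank F ↥(C ⊓ LinearMap.ker π) ≤ finrank F ↥(V ⊓ LinearMap.ker π) :=
      Submodule.finrank_mono (inf_le_inf_right _ hle)
    have hrank : (Matrix.fromBlocks T₁₁ X T₂₁ T₂₂).rank = finrank F ↥V := rfl
    omega
  -- the minimizing completion
  obtain ⟨g, hg⟩ := exists_ginverse T₂₁.mulVecLin
  set X₀ : Matrix (Fin ν₁) (Fin μ₂) F :=
    LinearMap.toMatrix' (T₁₁.mulVecLin ∘ₗ g ∘ₗ T₂₂.mulVecLin) with hX₀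
  have hX₀v : ∀ b, X₀ *ᵥ b = T₁₁ *ᵥ g (T₂₂ *ᵥ b) := by
    intro b
    have := Matrix.toLin'_toMatrix' (T₁₁.mulVecLin ∘ₗ g ∘ₗ T₂₂.mulVecLin)
    have h2 := congrFun (congrArg DFunLike.coe this) b
    rw [Matrix.toLin'_apply] at h2
    rw [hX₀]; exact h2
  have hupper : (Matrix.fromBlocks T₁₁ X₀ T₂₁ T₂₂).rank = μ₁ + ν₂ - r := by
    obtain ⟨hle, htop⟩ := key X₀
    set V := LinearMap.range (Matrix.fromBlocks T₁₁ X₀ T₂₁ T₂₂).mulVecLin with hV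
    have hsub : V ⊓ LinearMap.ker π ≤ C := by
      rintro v ⟨⟨w, rfl⟩, hker⟩
      set a := w ∘ Sum.inl with ha
      set b := w ∘ Sum.inr with hb
      have hw : w = Sum.elim a b := (Sum.elim_comp_inl_inr w).symm
      have hMw : (Matrix.fromBlocks T₁₁ X₀ T₂₁ T₂₂).mulVecLin w =
          Sum.elim (T₁₁ *ᵥ a + X₀ *ᵥ b) (T₂₁ *ᵥ a + T₂₂ *ᵥ b) := by
        rw [Matrix.mulVecLin_apply]
        conv_lhs => rw [hw]
        rw [Matrix.fromBlocks_mulVec, Sum.elim_comp_inl, Sum.elim_comp_inr]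
      have hbot : T₂₁ *ᵥ a + T₂₂ *ᵥ b = 0 := by
        have h' : π (Sum.elim (T₁₁ *ᵥ a + X₀ *ᵥ b) (T₂₁ *ᵥ a + T₂₂ *ᵥ b)) = 0 := by
          rw [← hMw]; exact hker
        have h'' : Sum.elim (T₁₁ *ᵥ a + X₀ *ᵥ b) (T₂₁ *ᵥ a + T₂₂ *ᵥ b) ∘ Sum.inr = 0 := by
          funext i
          exact congrFun h' i
        rwa [Sum.elim_comp_inr] at h''
      set c := a + g (T₂₂ *ᵥ b) with hc
      have hT₂₂b : T₂₂ *ᵥ b = -(T₂₁ *ᵥ a) := by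
        rw [eq_neg_iff_add_eq_zero, add_comm]; exact hbot
      have hgc : T₂₁ *ᵥ g (T₂₂ *ᵥ b) = T₂₂ *ᵥ b := by
        have h5 := hg (-a)
        simp only [Matrix.mulVecLin_apply, Matrix.mulVec_neg] at h5
        rw [hT₂₂b]
        exact h5
      have hT₂₁c : T₂₁ *ᵥ c = 0 := by
        rw [hc, Matrix.mulVec_add, hgc, hbot]
      have h0' : T₁₁ *ᵥ c = T₁₁ *ᵥ a + X₀ *ᵥ b := by
        rw [hX₀v b, hc, Matrix.mulVec_add]
      refine ⟨c, ?_⟩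
      rw [hL, Matrix.mulVecLin_apply, Matrix.fromRows_mulVec, hMw, h0', hT₂₁c, hbot]
    have heq : V ⊓ LinearMap.ker π = C ⊓ LinearMap.ker π :=
      le_antisymm (le_inf hsub inf_le_right) (inf_le_inf_right _ hle)
    have h := finrank_map_add_inf_ker V π
    have h1 : finrank F ↥(V.map π) = ν₂ := by rw [htop]; simp
    rw [heq, hCk, h1] at h
    have hrank : (Matrix.fromBlocks T₁₁ X₀ T₂₁ T₂₂).rank = finrank F ↥V := rfl
    omega
  apply le_antisymm
  · exact Nat.sInf_le ⟨X₀, hupper⟩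
  · exact le_csInf ⟨_, X₀, hupper⟩ (by rintro b ⟨X, rfl⟩; exact lower X)
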